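/- With the zero-subspace transformation and (A,B,C) of relative degree ρ, there exists ε ∈ {1, −1} such that, as polynomials in X over 𝕜, the unique entry of the 1×1 matrix C * adjugate(X·I_n − A) * B (all matrices taken with entries in the polynomial ring 𝕜[X], with A, B, C embedded via the constant-coefficient map) equals ε · (C * A^(ρ−1) * B) · charpoly(A_η). In particular, the multiset of roots (with multiplicity) of the numerator polynomial C·adjugate(XI−A)·B equals the multiset of eigenvalues of A_η counted with algebraic multiplicity. -/

import Mathlib

open Matrix Polynomial

/-- Determinant of the "chain" matrix (rows `x·e_j - e_{j+1}` for `j < ρ-1`, last row `e_0`)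
is `1`. -/
lemma stmt11_det_chain {R : Type*} [CommRing R] (ρ : ℕ) (hρ : 1 ≤ ρ) (x : R) :
    (Matrix.det (Matrix.of fun j j' : Fin ρ =>
      if (j:ℕ) = ρ - 1 then (if (j':ℕ) = 0 then (1:R) else 0)
      else if (j':ℕ) = (j:ℕ) then x else if (j':ℕ) = (j:ℕ)+1 then -1 else 0)) = 1 := by
  obtain ⟨m, rfl⟩ : ∃ m, ρ = m + 1 := ⟨ρ - 1, by omega⟩
  simp only [Nat.add_sub_cancel]
  set M : Matrix (Fin (m+1)) (Fin (m+1)) R := Matrix.of fun j j' : Fin (m+1) =>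
      if (j:ℕ) = m then (if (j':ℕ) = 0 then (1:R) else 0)
      else if (j':ℕ) = (j:ℕ) then x else if (j':ℕ) = (j:ℕ)+1 then -1 else 0 with hM
  set c : Equiv.Perm (Fin (m+1)) := finRotate (m+1) with hc
  have hck : ∀ k : Fin (m+1), ((c k : Fin (m+1)) : ℕ) = if (k:ℕ) = m then 0 else (k:ℕ)+1 := by
    intro k
    rw [hc, finRotate_succ_apply, Fin.val_add_one]
    rcases eq_or_ne k (Fin.last m) with h | h
    · simp [h]
    · have : ((k:ℕ) ≠ m) := fun hh => h (Fin.ext hh)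
      simp [h, this]
  have key : (M.submatrix (⇑(c⁻¹)) id).det = ((Equiv.Perm.sign c⁻¹ : ℤˣ) : ℤ) * M.det :=
    Matrix.det_permute c⁻¹ M
  have hNentry : ∀ i j : Fin (m+1), (i:ℕ) < (j:ℕ) → M (c⁻¹ i) j = 0 := by
    intro i j hij
    set k := c⁻¹ i with hk
    have hcki : c k = i := by rw [hk]; simp
    have hval := hck k
    rw [hcki] at hval
    rcases eq_or_ne ((k:ℕ)) m with h | h
    · have hj0 : (j:ℕ) ≠ 0 := by rw [h] at hval; simp at hval; omega
      simp [hM, h, hj0]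
      intro hh; exact absurd (by simp [hh] : (j:ℕ) = 0) hj0
    · rw [if_neg h] at hval
      have h1 : (j:ℕ) ≠ (k:ℕ) := by omega
      have h2 : (j:ℕ) ≠ (k:ℕ)+1 := by omega
      simp only [hM, Matrix.of_apply, if_neg h, if_neg h1, if_neg h2]
  have htri : (M.submatrix (⇑(c⁻¹)) id).det = ∏ i : Fin (m+1), M (c⁻¹ i) i := by
    apply Matrix.det_of_lowerTriangular
    intro i j hij
    exact hNentry i j hij
  have hdiag : ∀ i : Fin (m+1), M (c⁻¹ i) i = if (i:ℕ) = 0 then 1 else -1 := by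
    intro i
    set k := c⁻¹ i with hk
    have hcki : c k = i := by rw [hk]; simp
    have hval := hck k
    rw [hcki] at hval
    rcases eq_or_ne ((k:ℕ)) m with h | h
    · have hi0 : (i:ℕ) = 0 := by rw [h] at hval; simpa using hval
      simp [hM, h, hi0]
      intro hh; exact absurd (Fin.ext (by simp [hi0]) : i = 0) hh
    · rw [if_neg h] at hval
      have hik : (i:ℕ) ≠ (k:ℕ) := by omega
      simp only [hM, Matrix.of_apply, if_neg h, if_neg hik]
      rw [if_pos hval, if_neg (by omega : (i:ℕ) ≠ 0)]
  have hprod : ∏ i : Fin (m+1), M (c⁻¹ i) i = (-1)^m := by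
    rw [Fin.prod_univ_succ]
    have h0 : M (c⁻¹ 0) 0 = 1 := by rw [hdiag]; simp
    rw [h0, one_mul]
    have hs : ∀ i : Fin m, M (c⁻¹ i.succ) i.succ = -1 := by
      intro i; rw [hdiag, if_neg]; simp
    rw [Finset.prod_congr rfl (fun i _ => hs i)]
    simp
  have hsign : ((Equiv.Perm.sign c⁻¹ : ℤˣ) : ℤ) = (-1)^m := by
    rw [Equiv.Perm.sign_inv, hc, sign_finRotate]; simp
  rw [htri, hprod, hsign] at key
  push_cast at key
  have hfin : ((-1:R)^m) * ((-1)^m * M.det) = ((-1:R)^m) * (-1)^m := by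
    rw [← key]
  rw [← mul_assoc, ← mul_pow, neg_mul_neg, one_mul, one_pow, one_mul] at hfin
  exact hfin

set_option maxHeartbeats 1000000 in
/-- There exists `ε ∈ {1, -1}` such that, as polynomials in `X`,
the entry of `C * adj(X I - A) * B` equals `ε * (C * A^(ρ-1) * B) * charpoly(A_η)`;
in particular the multiset of roots of the numerator polynomial equals the multiset of
eigenvalues of `A_η` with algebraic multiplicity. -/
theorem stmt11 {𝕜 : Type*} [Field 𝕜] {n ρ : ℕ} (hn : 1 ≤ n) (hρ : 1 ≤ ρ) (hρn : ρ ≤ n)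
    (A : Matrix (Fin n) (Fin n) 𝕜) (B : Matrix (Fin n) (Fin 1) 𝕜)
    (C : Matrix (Fin 1) (Fin n) 𝕜)
    (hrd : ∀ i : ℕ, i + 2 ≤ ρ → C * A ^ i * B = 0)
    (hrd' : C * A ^ (ρ - 1) * B ≠ 0)
    (Cbar : Matrix (Fin ρ) (Fin n) 𝕜)
    (hCbar : ∀ (i : Fin ρ) (j : Fin n), Cbar i j = (C * A ^ (i : ℕ)) 0 j)
    (Bz : Matrix (Fin (n - ρ)) (Fin n) 𝕜) (hBz : Bz * B = 0)
    (T : Matrix (Fin n) (Fin n) 𝕜)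
    (hT : ∀ (i : Fin n) (j : Fin n),
      T i j = if h : (i : ℕ) < n - ρ then Bz ⟨i, h⟩ j
              else Cbar ⟨(i : ℕ) - (n - ρ), by omega⟩ j)
    (hTinv : IsUnit T.det)
    (Seta : Matrix (Fin n) (Fin (n - ρ)) 𝕜)
    (hSeta : ∀ (i : Fin n) (k : Fin (n - ρ)), Seta i k = T⁻¹ i ⟨(k : ℕ), by omega⟩)
    (Sxi : Matrix (Fin n) (Fin ρ) 𝕜)
    (hSxi : ∀ (i : Fin n) (k : Fin ρ), Sxi i k = T⁻¹ i ⟨n - ρ + (k : ℕ), by omega⟩)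
    (Aeta : Matrix (Fin (n - ρ)) (Fin (n - ρ)) 𝕜)
    (hAeta : Aeta = Bz * A * Seta)
    :
    ∃ ε : 𝕜, (ε = 1 ∨ ε = -1) ∧
      (C.map Polynomial.C * (Matrix.charmatrix A).adjugate * B.map Polynomial.C) 0 0 =
        Polynomial.C ε * Polynomial.C ((C * A ^ (ρ - 1) * B) 0 0) * Aeta.charpoly ∧
      ((C.map Polynomial.C * (Matrix.charmatrix A).adjugate * B.map Polynomial.C) 0 0).roots =
        Aeta.charpoly.roots := by
  -- setup
  have hTS : T * T⁻¹ = 1 := mul_nonsing_inv T hTinv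
  have hST : T⁻¹ * T = 1 := nonsing_inv_mul T hTinv
  set S : Matrix (Fin n) (Fin n) 𝕜 := T⁻¹ with hSdef
  set b : 𝕜 := (C * A ^ (ρ - 1) * B) 0 0 with hbdef
  have hb : b ≠ 0 := by
    intro h
    apply hrd'
    ext i j
    have hi : i = 0 := Subsingleton.elim _ _
    have hj : j = 0 := Subsingleton.elim _ _
    rw [hi, hj]
    simpa using h
  -- rows of T
  have hTrow_low : ∀ (i : Fin n) (h : (i:ℕ) < n - ρ) (j : Fin n), T i j = Bz ⟨i, h⟩ j := by
    intro i h j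
    rw [hT i j, dif_pos h]
  have hTrow_high : ∀ (i : Fin n), n - ρ ≤ (i:ℕ) → ∀ (j : Fin n),
      T i j = (C * A ^ ((i:ℕ) - (n - ρ))) 0 j := by
    intro i h j
    rw [hT i j, dif_neg (by omega), hCbar]
  set klz : Fin n := ⟨n - ρ, by omega⟩ with hklz
  set kn1 : Fin n := ⟨n - 1, by omega⟩ with hkn1
  -- the auxiliary matrices U and V
  set U : Matrix (Fin 1) (Fin n) 𝕜 := Matrix.of fun _ j => if (j:ℕ) = n - ρ then 1 else 0 with hU
  set V : Matrix (Fin n) (Fin 1) 𝕜 := Matrix.of fun k _ => if (k:ℕ) = n - 1 then b else 0 with hV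
  have hCU : C = U * T := by
    ext i j
    have hi : i = 0 := Subsingleton.elim _ _
    subst hi
    rw [Matrix.mul_apply, Finset.sum_eq_single klz]
    · rw [hU]
      simp only [Matrix.of_apply, hklz, if_pos rfl, one_mul]
      rw [hTrow_high klz (by simp [hklz]) j]
      simp [hklz, pow_zero, Matrix.mul_one]
    · intro k _ hk
      have : (k:ℕ) ≠ n - ρ := fun hh => hk (Fin.ext (by simp [hklz, hh]))
      rw [hU]
      simp [this]
    · intro h
      exact absurd (Finset.mem_univ klz) h
  have hTB : T * B = V := by
    ext i j
    have hj : j = 0 := Subsingleton.elim _ _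
    subst hj
    rcases lt_or_ge (i:ℕ) (n - ρ) with h | h
    · have : (T * B) i 0 = (Bz * B) ⟨i, h⟩ 0 := by
        rw [Matrix.mul_apply, Matrix.mul_apply]
        exact Finset.sum_congr rfl fun k _ => by rw [hTrow_low i h k]
      rw [this, hBz, Matrix.zero_apply, hV]
      have : (i:ℕ) ≠ n - 1 := by omega
      simp [this]
    · have hsum : (T * B) i 0 = (C * A ^ ((i:ℕ) - (n - ρ)) * B) 0 0 := by
        rw [Matrix.mul_apply, Matrix.mul_apply]
        exact Finset.sum_congr rfl fun k _ => by rw [hTrow_high i h k]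
      rcases eq_or_ne ((i:ℕ)) (n-1) with h1 | h1
      · have : (i:ℕ) - (n - ρ) = ρ - 1 := by omega
        rw [hsum, this, hV]
        simp [h1, hbdef]
      · have hle : ((i:ℕ) - (n - ρ)) + 2 ≤ ρ := by omega
        rw [hsum, hrd _ hle, hV]
        simp [h1]
  have hBV : B = S * V := by
    rw [← hTB, ← Matrix.mul_assoc, hST, Matrix.one_mul]
  -- transformed matrix
  set Abar : Matrix (Fin n) (Fin n) 𝕜 := T * A * S with hAbar
  set P : Matrix (Fin n) (Fin n) 𝕜[X] := charmatrix Abar with hP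
  have hSpTp : S.map Polynomial.C * T.map Polynomial.C = 1 := by
    rw [← Matrix.map_mul (f := (Polynomial.C : 𝕜 →+* 𝕜[X])), hST]
    exact Matrix.map_one _ (map_zero _) (map_one _)
  have hTpSp : T.map Polynomial.C * S.map Polynomial.C = 1 := by
    rw [← Matrix.map_mul (f := (Polynomial.C : 𝕜 →+* 𝕜[X])), hTS]
    exact Matrix.map_one _ (map_zero _) (map_one _)
  have hcm : ∀ (M : Matrix (Fin n) (Fin n) 𝕜),
      charmatrix M = (X:𝕜[X]) • (1 : Matrix (Fin n) (Fin n) 𝕜[X]) - M.map Polynomial.C := by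
    intro M
    ext i j
    rw [Matrix.charmatrix_apply, Matrix.diagonal_apply]
    by_cases h : i = j <;> simp [h, Matrix.one_apply]
  have hchar : charmatrix A = S.map Polynomial.C * P * T.map Polynomial.C := by
    rw [hP, hcm, hcm, hAbar]
    have hmap : (T * A * S).map (Polynomial.C : 𝕜 → 𝕜[X])
        = T.map Polynomial.C * A.map Polynomial.C * S.map Polynomial.C := by
      rw [Matrix.map_mul (f := (Polynomial.C : 𝕜 →+* 𝕜[X])),
        Matrix.map_mul (f := (Polynomial.C : 𝕜 →+* 𝕜[X]))]
    rw [hmap, Matrix.mul_sub, Matrix.sub_mul, Matrix.mul_smul, Matrix.mul_one,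
      Matrix.smul_mul, hSpTp]
    congr 1
    symm
    calc S.map Polynomial.C * (T.map Polynomial.C * A.map Polynomial.C * S.map Polynomial.C)
          * T.map Polynomial.C
        = (S.map Polynomial.C * T.map Polynomial.C) * A.map Polynomial.C
          * (S.map Polynomial.C * T.map Polynomial.C) := by
          simp only [Matrix.mul_assoc]
      _ = A.map Polynomial.C := by rw [hSpTp, Matrix.one_mul, Matrix.mul_one]
  -- main reduction
  have key6 : C.map Polynomial.C * (charmatrix A).adjugate * B.map Polynomial.C
      = U.map Polynomial.C * P.adjugate * V.map Polynomial.C := by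
    have hCp : C.map (Polynomial.C : 𝕜 → 𝕜[X]) = U.map Polynomial.C * T.map Polynomial.C := by
      rw [hCU, Matrix.map_mul (f := (Polynomial.C : 𝕜 →+* 𝕜[X]))]
    have hBp : B.map (Polynomial.C : 𝕜 → 𝕜[X]) = S.map Polynomial.C * V.map Polynomial.C := by
      rw [hBV, Matrix.map_mul (f := (Polynomial.C : 𝕜 →+* 𝕜[X]))]
    rw [hchar, hCp, hBp, Matrix.adjugate_mul_distrib, Matrix.adjugate_mul_distrib]
    have hdet1 : (T.map (Polynomial.C : 𝕜 → 𝕜[X])).det * (S.map Polynomial.C).det = 1 := by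
      rw [← Matrix.det_mul, hTpSp, Matrix.det_one]
    calc U.map Polynomial.C * T.map Polynomial.C
          * ((T.map Polynomial.C).adjugate * (P.adjugate * (S.map Polynomial.C).adjugate))
          * (S.map Polynomial.C * V.map Polynomial.C)
        = U.map Polynomial.C * (T.map Polynomial.C * (T.map Polynomial.C).adjugate)
          * P.adjugate * ((S.map Polynomial.C).adjugate * S.map Polynomial.C)
          * V.map Polynomial.C := by
          simp only [Matrix.mul_assoc]
      _ = ((T.map Polynomial.C).det * (S.map Polynomial.C).det)
            • (U.map Polynomial.C * P.adjugate * V.map Polynomial.C) := by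
          rw [Matrix.mul_adjugate, Matrix.adjugate_mul]
          simp only [Matrix.mul_smul, Matrix.smul_mul, Matrix.mul_one, Matrix.one_mul, smul_smul]
          rw [mul_comm ((S.map (Polynomial.C : 𝕜 → 𝕜[X])).det)]
      _ = U.map Polynomial.C * P.adjugate * V.map Polynomial.C := by
          rw [hdet1, one_smul]
  have hentry : (U.map Polynomial.C * P.adjugate * V.map Polynomial.C) 0 0
      = Polynomial.C b * P.adjugate klz kn1 := by
    rw [Matrix.mul_apply, Finset.sum_eq_single kn1]
    · have hV1 : (V.map (Polynomial.C : 𝕜 → 𝕜[X])) kn1 0 = Polynomial.C b := by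
        rw [hV]
        simp [hkn1]
      rw [hV1, Matrix.mul_apply, Finset.sum_eq_single klz]
      · have hU1 : (U.map (Polynomial.C : 𝕜 → 𝕜[X])) 0 klz = 1 := by
          rw [hU]; simp [hklz]
        rw [hU1, one_mul, mul_comm]
      · intro k _ hk
        have : (k:ℕ) ≠ n - ρ := fun hh => hk (Fin.ext (by simp [hklz, hh]))
        rw [hU]
        simp [this]
      · intro h
        exact absurd (Finset.mem_univ klz) h
    · intro k _ hk
      have : (k:ℕ) ≠ n - 1 := fun hh => hk (Fin.ext (by simp [hkn1, hh]))
      rw [hV]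
      simp [this]
    · intro h
      exact absurd (Finset.mem_univ kn1) h
  -- the updated-row determinant
  set N' : Matrix (Fin n) (Fin n) 𝕜[X] := P.updateRow kn1 (Pi.single klz 1) with hN'
  have hadj : P.adjugate klz kn1 = N'.det := Matrix.adjugate_apply P klz kn1
  -- block structure
  have hlz : n - ρ + ρ = n := by omega
  set e : Fin (n-ρ) ⊕ Fin ρ ≃ Fin n := finSumFinEquiv.trans (finCongr hlz) with he
  have he1 : ∀ i : Fin (n-ρ), ((e (Sum.inl i)) : ℕ) = (i:ℕ) := by
    intro i; simp [he]
  have he2 : ∀ j : Fin ρ, ((e (Sum.inr j)) : ℕ) = (n-ρ) + (j:ℕ) := by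
    intro j; simp [he]
  have hAbar_low : ∀ (r c : Fin n) (hr : (r:ℕ) < n-ρ) (hc : (c:ℕ) < n-ρ),
      Abar r c = Aeta ⟨r, hr⟩ ⟨c, hc⟩ := by
    intro r c hr hc
    rw [hAbar, hAeta, Matrix.mul_assoc, Matrix.mul_assoc, Matrix.mul_apply, Matrix.mul_apply]
    apply Finset.sum_congr rfl
    intro k _
    rw [hTrow_low r hr k]
    congr 1
    rw [Matrix.mul_apply, Matrix.mul_apply]
    apply Finset.sum_congr rfl
    intro l _
    rw [hSeta l ⟨c, hc⟩]
  have hAbar_chain : ∀ (r c : Fin n), n-ρ ≤ (r:ℕ) → (r:ℕ) < n-1 →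
      Abar r c = if (c:ℕ) = (r:ℕ)+1 then 1 else 0 := by
    intro r c hr hr1
    have hr1n : (r:ℕ) + 1 < n := by omega
    set r' : Fin n := ⟨(r:ℕ)+1, hr1n⟩ with hr'
    have hTA : ∀ k, (T * A) r k = T r' k := by
      intro k
      rw [Matrix.mul_apply]
      rw [Finset.sum_congr rfl fun l _ => by rw [hTrow_high r hr l]]
      rw [← Matrix.mul_apply]
      rw [hTrow_high r' (by simp [hr']; omega) k]
      have hpow : C * A ^ ((r:ℕ) - (n-ρ)) * A = C * A ^ (((r':ℕ)) - (n-ρ)) := by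
        rw [Matrix.mul_assoc, ← pow_succ]
        congr 2
        simp [hr']
        omega
      exact congrFun (congrFun hpow 0) k
    rw [hAbar, Matrix.mul_apply]
    rw [Finset.sum_congr rfl fun k _ => by rw [hTA k]]
    rw [← Matrix.mul_apply, hTS, Matrix.one_apply]
    by_cases h : (c:ℕ) = (r:ℕ) + 1
    · rw [if_pos (Fin.ext (by simp [hr', h])), if_pos h]
    · rw [if_neg (fun hh : r' = c => h (by rw [← hh])), if_neg h]
  set Q : Matrix (Fin (n-ρ)) (Fin ρ) 𝕜[X] :=
    Matrix.of fun i j => N' (e (Sum.inl i)) (e (Sum.inr j)) with hQ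
  set Rm : Matrix (Fin ρ) (Fin ρ) 𝕜[X] := Matrix.of fun j j' =>
      if (j:ℕ) = ρ - 1 then (if (j':ℕ) = 0 then (1:𝕜[X]) else 0)
      else if (j':ℕ) = (j:ℕ) then X else if (j':ℕ) = (j:ℕ)+1 then -1 else 0 with hRm
  have hklzval : (klz : ℕ) = n - ρ := rfl
  have hkn1val : (kn1 : ℕ) = n - 1 := rfl
  have hblock : N'.submatrix e e = fromBlocks (charmatrix Aeta) Q 0 Rm := by
    ext i j
    rcases i with i | i <;> rcases j with j | j
    · -- top-left block
      rw [Matrix.submatrix_apply, Matrix.fromBlocks_apply₁₁]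
      have hne : e (Sum.inl i) ≠ kn1 := by
        intro hh
        have := congrArg Fin.val hh
        rw [he1, hkn1val] at this
        have := i.isLt
        omega
      rw [hN', Matrix.updateRow_ne hne, hP, Matrix.charmatrix_apply, Matrix.charmatrix_apply]
      have hAe : Abar (e (Sum.inl i)) (e (Sum.inl j)) = Aeta i j := by
        rw [hAbar_low _ _ (by rw [he1]; exact i.isLt) (by rw [he1]; exact j.isLt)]
        congr 1 <;> exact Fin.ext (by rw [he1])
      rw [hAe]
      congr 1
      rw [Matrix.diagonal_apply, Matrix.diagonal_apply]
      by_cases h : i = j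
      · rw [if_pos h, if_pos (by rw [h])]
      · rw [if_neg (fun hh => h (Sum.inl_injective (e.injective hh))), if_neg h]
    · -- top-right block
      rw [Matrix.submatrix_apply, Matrix.fromBlocks_apply₁₂, hQ]
      rfl
    · -- bottom-left block: zero
      rw [Matrix.submatrix_apply, Matrix.fromBlocks_apply₂₁, Matrix.zero_apply]
      rcases eq_or_ne ((i:ℕ)) (ρ-1) with h | h
      · have hrow : e (Sum.inr i) = kn1 := Fin.ext (by rw [he2, hkn1val]; omega)
        rw [hN', hrow, Matrix.updateRow_self, Pi.single_apply, if_neg]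
        intro hh
        have := congrArg Fin.val hh
        rw [he1, hklzval] at this
        have := j.isLt
        omega
      · have hne : e (Sum.inr i) ≠ kn1 := by
          intro hh
          have := congrArg Fin.val hh
          rw [he2, hkn1val] at this
          have := i.isLt
          omega
        rw [hN', Matrix.updateRow_ne hne, hP, Matrix.charmatrix_apply, Matrix.diagonal_apply]
        rw [hAbar_chain _ _ (by rw [he2]; omega) (by rw [he2]; have := i.isLt; omega)]
        rw [if_neg, if_neg, map_zero, sub_zero]
        · intro hh
          rw [he1, he2] at hh
          have := j.isLt
          omega
        · intro hh
          have h1 := congrArg Fin.val hh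
          rw [he2] at h1
          have h2 := he1 j
          have := j.isLt
          omega
    · -- bottom-right block
      rw [Matrix.submatrix_apply, Matrix.fromBlocks_apply₂₂, hRm]
      rcases eq_or_ne ((i:ℕ)) (ρ-1) with h | h
      · have hrow : e (Sum.inr i) = kn1 := Fin.ext (by rw [he2, hkn1val]; omega)
        rw [hN', hrow, Matrix.updateRow_self, Pi.single_apply]
        simp only [Matrix.of_apply, if_pos h]
        by_cases h0 : (j:ℕ) = 0
        · rw [if_pos (Fin.ext (by rw [he2, hklzval]; omega) : e (Sum.inr j) = klz), if_pos h0]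
        · rw [if_neg, if_neg h0]
          intro hh
          have := congrArg Fin.val hh
          rw [he2, hklzval] at this
          omega
      · have hlt : (i:ℕ) < ρ - 1 := by have := i.isLt; omega
        have hne : e (Sum.inr i) ≠ kn1 := by
          intro hh
          have := congrArg Fin.val hh
          rw [he2, hkn1val] at this
          omega
        rw [hN', Matrix.updateRow_ne hne, hP, Matrix.charmatrix_apply, Matrix.diagonal_apply]
        rw [hAbar_chain _ _ (by rw [he2]; omega) (by rw [he2]; omega)]
        simp only [Matrix.of_apply, if_neg h]
        by_cases hd : (j:ℕ) = (i:ℕ)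
        · rw [if_pos (show e (Sum.inr i) = e (Sum.inr j) from
              Fin.ext (by rw [he2, he2, hd])),
            if_neg (show ¬ ((e (Sum.inr j) : ℕ) = (e (Sum.inr i) : ℕ) + 1) from
              by rw [he2, he2]; omega),
            if_pos hd, map_zero, sub_zero]
        · by_cases hd1 : (j:ℕ) = (i:ℕ) + 1
          · rw [if_neg (show e (Sum.inr i) ≠ e (Sum.inr j) from fun hh => by
                have := congrArg Fin.val hh; rw [he2, he2] at this; omega),
              if_pos (show ((e (Sum.inr j) : ℕ) = (e (Sum.inr i) : ℕ) + 1) from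
                by rw [he2, he2]; omega),
              if_neg hd, if_pos hd1, Polynomial.C_1, zero_sub]
          · rw [if_neg (show e (Sum.inr i) ≠ e (Sum.inr j) from fun hh => by
                have := congrArg Fin.val hh; rw [he2, he2] at this; omega),
              if_neg (show ¬ ((e (Sum.inr j) : ℕ) = (e (Sum.inr i) : ℕ) + 1) from
                by rw [he2, he2]; omega),
              if_neg hd, if_neg hd1, map_zero, sub_zero]
  have hdetN : N'.det = Aeta.charpoly := by
    rw [← Matrix.det_submatrix_equiv_self e N', hblock, Matrix.det_fromBlocks_zero₂₁]
    have : Rm.det = 1 := stmt11_det_chain ρ hρ X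
    rw [this, mul_one]
    rfl
  refine ⟨1, Or.inl rfl, ?_, ?_⟩
  · rw [key6, hentry, hadj, hdetN, Polynomial.C_1, one_mul]
  · rw [key6, hentry, hadj, hdetN, Polynomial.roots_C_mul _ hb]
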